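/- Every impartial game G is either even or odd, but not both. -/

import Mathlib

inductive IGame : Type where
  | mk : List IGame → IGame

namespace IGame

/-- The options of a game. -/
def opts : IGame → List IGame
  | mk l => l

theorem sizeOf_lt_of_mem {x : IGame} {l : List IGame} (h : x ∈ l) :
    sizeOf x < sizeOf (mk l) := by
  have := List.sizeOf_lt_of_mem h
  simp only [mk.sizeOf_spec]
  omega

/-- `x` is an option of `G`. -/
def IsOption (x G : IGame) : Prop := x ∈ G.opts

/-- The empty game `0`. -/
def zero : IGame := mk []

/-- The game `* = {0}`. -/
def star : IGame := mk [zero]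

/-- The game `*2 = {0, *}`. -/
def star2 : IGame := mk [zero, star]

/-- The game `*3 = {0, *, *2}`. -/
def star3 : IGame := mk [zero, star, star2]

/-- Disjunctive sum of games. -/
def add : IGame → IGame → IGame
  | mk l, mk r =>
    mk ((l.attach.map fun x => add x.1 (mk r)) ++
        (r.attach.map fun y => add (mk l) y.1))
termination_by G H => (sizeOf G, sizeOf H)
decreasing_by
  · exact Prod.Lex.left _ _ (sizeOf_lt_of_mem x.2)
  · exact Prod.Lex.right _ (sizeOf_lt_of_mem y.2)

/-- `MisereP G` holds iff the misère outcome of `G` is `P`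
(i.e. `G` has at least one option and no option is a `P`-position). -/
def MisereP : IGame → Prop
  | mk l => l ≠ [] ∧ ∀ x ∈ l, ¬ MisereP x
termination_by G => sizeOf G
decreasing_by exact sizeOf_lt_of_mem (by assumption)

/-- Misère equality of games. -/
def MEquiv (G H : IGame) : Prop :=
  ∀ X : IGame, MisereP (add G X) ↔ MisereP (add H X)

theorem mequiv_refl (G : IGame) : MEquiv G G := fun _ => Iff.rfl
theorem mequiv_symm {G H : IGame} (h : MEquiv G H) : MEquiv H G := fun X => (h X).symm
theorem mequiv_trans {G H K : IGame} (h₁ : MEquiv G H) (h₂ : MEquiv H K) :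
    MEquiv G K := fun X => (h₁ X).trans (h₂ X)

/-- `G` is linked to `H` if `G + T` and `H + T` are both misère `P`-positions for some `T`. -/
def Linked (G H : IGame) : Prop :=
  ∃ T : IGame, MisereP (add G T) ∧ MisereP (add H T)

/-- `H` is a part of `G` if `G = H + X` (misère-equal) for some `X`. -/
def IsPart (H G : IGame) : Prop :=
  ∃ X : IGame, MEquiv G (add H X)

/-- `G` has a reversible option: some option `G'` of `G` has an option `G''` misère-equal
to `G`. -/
def HasReversibleOption (G : IGame) : Prop :=
  ∃ G' ∈ G.opts, ∃ G'' ∈ G'.opts, MEquiv G'' G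

/-- `G` is in simplest (canonical) form: neither `G` nor any of its hereditary
subpositions has a reversible option. -/
def Canonical (G : IGame) : Prop :=
  ∀ H : IGame, Relation.ReflTransGen IsOption H G → ¬ HasReversibleOption H

/-- `G` is even if the simplest form of `G` occurs as an option of the simplest form of
`G + *`. -/
def EvenG (G : IGame) : Prop :=
  ∃ K L : IGame, Canonical K ∧ MEquiv K G ∧ Canonical L ∧ MEquiv L (add G star) ∧
    IsOption K L

/-- `G` is odd if `G + *` is even. -/
def OddG (G : IGame) : Prop := EvenG (add G star)

/-- A unit is a game with an additive inverse (up to misère equality). -/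
def IsUnitG (U : IGame) : Prop :=
  ∃ V : IGame, MEquiv (add U V) zero

/-- `G` and `H` are associates if they differ by a unit. -/
def Assoc (G H : IGame) : Prop :=
  ∃ U : IGame, IsUnitG U ∧ MEquiv G (add H U)

/-- `G` is prime if `G` is not a unit and every part of `G` is associated to `0` or
to `G`. -/
def PrimeG (G : IGame) : Prop :=
  ¬ IsUnitG G ∧ ∀ H : IGame, IsPart H G → Assoc H zero ∨ Assoc H G

/-- The sum `n · G` of `n` copies of `G`. -/
def nsmul : ℕ → IGame → IGame
  | 0, _ => zero
  | n + 1, G => add G (nsmul n G)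

/-- The sum of a list of games. -/
def listSum (L : List IGame) : IGame := L.foldr add zero

/-- The mate `G⁻` of `G`. -/
def mate : IGame → IGame
  | mk [] => star
  | mk (x :: l) => mk ((x :: l).attach.map fun y => mate y.1)
termination_by G => sizeOf G
decreasing_by exact sizeOf_lt_of_mem y.2

/-- The formal birthday of a game. -/
def fbd : IGame → ℕ
  | mk l => (l.attach.map fun x => fbd x.1 + 1).foldr max 0
termination_by G => sizeOf G
decreasing_by exact sizeOf_lt_of_mem x.2

/-- The birthday of a game: the least formal birthday among all misère-equal games. -/
noncomputable def birthday (G : IGame) : ℕ :=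
  sInf (fbd '' {H : IGame | MEquiv G H})

instance setoid : Setoid IGame :=
  ⟨MEquiv, fun _ => mequiv_refl _, mequiv_symm, mequiv_trans⟩

/-- The monoid of misère impartial game values: games modulo misère equality. -/
def MGame := Quotient setoid

section Basics

theorem sizeOf_lt_opts {x G : IGame} (h : x ∈ G.opts) : sizeOf x < sizeOf G := by
  cases G with | mk l => exact sizeOf_lt_of_mem h

theorem strongInd {motive : IGame → Prop}
    (ih : ∀ G : IGame, (∀ x ∈ G.opts, motive x) → motive G) : ∀ G, motive G :=
  fun G => ih G (fun x hx => strongInd ih x)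
termination_by G => sizeOf G
decreasing_by exact sizeOf_lt_opts hx

theorem misereP_iff (G : IGame) :
    MisereP G ↔ G.opts ≠ [] ∧ ∀ x ∈ G.opts, ¬ MisereP x := by
  cases G with | mk l => rw [MisereP]; exact Iff.rfl

theorem misereP_of {G : IGame} (h1 : G.opts ≠ []) (h2 : ∀ x ∈ G.opts, ¬ MisereP x) :
    MisereP G := (misereP_iff G).2 ⟨h1, h2⟩

theorem not_misereP {G w : IGame} (hw : w ∈ G.opts) (hP : MisereP w) : ¬ MisereP G :=
  fun h => ((misereP_iff G).1 h).2 w hw hP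

theorem opts_zero : zero.opts = [] := rfl
theorem opts_star : star.opts = [zero] := rfl

theorem opts_add (G H : IGame) :
    (add G H).opts = (G.opts.map fun a => add a H) ++ (H.opts.map fun b => add G b) := by
  cases G with | mk l =>
  cases H with | mk r =>
  rw [add]
  show (l.attach.map fun x => add x.1 (mk r)) ++ (r.attach.map fun y => add (mk l) y.1) = _
  simp only [List.map_attach_eq_pmap, List.pmap_eq_map]
  rfl

end Basics
section AddMem

theorem mem_opts_add_left {a G : IGame} (H : IGame) (ha : a ∈ G.opts) :
    add a H ∈ (add G H).opts := by
  rw [opts_add]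
  exact List.mem_append_left _ (List.mem_map_of_mem ha)

theorem mem_opts_add_right {b H : IGame} (G : IGame) (hb : b ∈ H.opts) :
    add G b ∈ (add G H).opts := by
  rw [opts_add]
  exact List.mem_append_right _ (List.mem_map_of_mem hb)

theorem mem_opts_add_cases {w G H : IGame} (hw : w ∈ (add G H).opts) :
    (∃ a ∈ G.opts, w = add a H) ∨ (∃ b ∈ H.opts, w = add G b) := by
  rw [opts_add] at hw
  rcases List.mem_append.1 hw with h | h
  · obtain ⟨a, ha, rfl⟩ := List.mem_map.1 h
    exact Or.inl ⟨a, ha, rfl⟩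
  · obtain ⟨b, hb, rfl⟩ := List.mem_map.1 h
    exact Or.inr ⟨b, hb, rfl⟩

theorem opts_add_eq_nil {G H : IGame} :
    (add G H).opts = [] ↔ G.opts = [] ∧ H.opts = [] := by
  rw [opts_add]
  simp

end AddMem

section Corr

theorem misereP_corr {A B : IGame} (h0 : A.opts = [] ↔ B.opts = [])
    (h1 : ∀ a ∈ A.opts, ∃ b ∈ B.opts, (MisereP a ↔ MisereP b))
    (h2 : ∀ b ∈ B.opts, ∃ a ∈ A.opts, (MisereP a ↔ MisereP b)) :
    MisereP A ↔ MisereP B := by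
  rw [misereP_iff, misereP_iff]
  constructor
  · rintro ⟨hA, hA2⟩
    refine ⟨fun h => hA (h0.2 h), fun b hb hbP => ?_⟩
    obtain ⟨a, ha, hab⟩ := h2 b hb
    exact hA2 a ha (hab.2 hbP)
  · rintro ⟨hB, hB2⟩
    refine ⟨fun h => hB (h0.1 h), fun a ha haP => ?_⟩
    obtain ⟨b, hb, hab⟩ := h1 a ha
    exact hB2 b hb (hab.1 haP)

end Corr

section Ext

def Ext : IGame → IGame → Prop
  | mk l, mk r =>
      (∀ a : {x // x ∈ l}, ∃ b : {x // x ∈ r}, Ext a.1 b.1) ∧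
      (∀ b : {x // x ∈ r}, ∃ a : {x // x ∈ l}, Ext a.1 b.1)
termination_by G H => sizeOf G + sizeOf H
decreasing_by
  · exact Nat.add_lt_add (sizeOf_lt_of_mem a.2) (sizeOf_lt_of_mem b.2)
  · exact Nat.add_lt_add (sizeOf_lt_of_mem a.2) (sizeOf_lt_of_mem b.2)

theorem ext_iff {G H : IGame} : Ext G H ↔
    (∀ a ∈ G.opts, ∃ b ∈ H.opts, Ext a b) ∧ (∀ b ∈ H.opts, ∃ a ∈ G.opts, Ext a b) := by
  cases G with | mk l =>
  cases H with | mk r =>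
  rw [Ext]
  constructor
  · rintro ⟨u, v⟩
    constructor
    · intro a ha; obtain ⟨b, hb⟩ := u ⟨a, ha⟩; exact ⟨b.1, b.2, hb⟩
    · intro b hb; obtain ⟨a, ha⟩ := v ⟨b, hb⟩; exact ⟨a.1, a.2, ha⟩
  · rintro ⟨u, v⟩
    constructor
    · intro a; obtain ⟨b, hb, he⟩ := u a.1 a.2; exact ⟨⟨b, hb⟩, he⟩
    · intro b; obtain ⟨a, ha, he⟩ := v b.1 b.2; exact ⟨⟨a, ha⟩, he⟩

theorem ext_of {G H : IGame}
    (u : ∀ a ∈ G.opts, ∃ b ∈ H.opts, Ext a b) (v : ∀ b ∈ H.opts, ∃ a ∈ G.opts, Ext a b) :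
    Ext G H := ext_iff.2 ⟨u, v⟩

theorem Ext.left {G H : IGame} (h : Ext G H) : ∀ a ∈ G.opts, ∃ b ∈ H.opts, Ext a b :=
  (ext_iff.1 h).1

theorem Ext.right {G H : IGame} (h : Ext G H) : ∀ b ∈ H.opts, ∃ a ∈ G.opts, Ext a b :=
  (ext_iff.1 h).2

theorem ext_opts_nil {G H : IGame} (h : Ext G H) : G.opts = [] ↔ H.opts = [] := by
  constructor
  · intro hG
    rcases hH : H.opts with _ | ⟨b, r⟩
    · rfl
    · obtain ⟨a, ha, -⟩ := h.right b (by rw [hH]; exact List.mem_cons_self)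
      rw [hG] at ha; cases ha
  · intro hH
    rcases hG : G.opts with _ | ⟨a, l⟩
    · rfl
    · obtain ⟨b, hb, -⟩ := h.left a (by rw [hG]; exact List.mem_cons_self)
      rw [hH] at hb; cases hb

theorem ext_refl (G : IGame) : Ext G G :=
  ext_of (fun a ha => ⟨a, ha, ext_refl a⟩) (fun a ha => ⟨a, ha, ext_refl a⟩)
termination_by sizeOf G
decreasing_by all_goals exact sizeOf_lt_opts ha

theorem ext_symm {G H : IGame} (h : Ext G H) : Ext H G :=
  ext_of (fun b hb => (h.right b hb).imp fun a ⟨ha, he⟩ => ⟨ha, ext_symm he⟩)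
         (fun a ha => (h.left a ha).imp fun b ⟨hb, he⟩ => ⟨hb, ext_symm he⟩)
termination_by sizeOf G + sizeOf H
decreasing_by
  · have := sizeOf_lt_opts hb; have := sizeOf_lt_opts ha; omega
  · have := sizeOf_lt_opts hb; have := sizeOf_lt_opts ha; omega

theorem ext_trans {G H K : IGame} (h1 : Ext G H) (h2 : Ext H K) : Ext G K := by
  refine ext_of (fun a ha => ?_) (fun c hc => ?_)
  · obtain ⟨b, hb, e1⟩ := h1.left a ha
    obtain ⟨c, hc, e2⟩ := h2.left b hb
    exact ⟨c, hc, ext_trans e1 e2⟩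
  · obtain ⟨b, hb, e2⟩ := h2.right c hc
    obtain ⟨a, ha, e1⟩ := h1.right b hb
    exact ⟨a, ha, ext_trans e1 e2⟩
termination_by sizeOf G + sizeOf K
decreasing_by
  · exact Nat.add_lt_add (sizeOf_lt_opts ha) (sizeOf_lt_opts hc)
  · exact Nat.add_lt_add (sizeOf_lt_opts ha) (sizeOf_lt_opts hc)

theorem ext_misereP {G H : IGame} (h : Ext G H) : MisereP G ↔ MisereP H := by
  refine misereP_corr (ext_opts_nil h) (fun a ha => ?_) (fun b hb => ?_)
  · obtain ⟨b, hb, he⟩ := h.left a ha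
    exact ⟨b, hb, ext_misereP he⟩
  · obtain ⟨a, ha, he⟩ := h.right b hb
    exact ⟨a, ha, ext_misereP he⟩
termination_by sizeOf G + sizeOf H
decreasing_by
  · exact Nat.add_lt_add (sizeOf_lt_opts ha) (sizeOf_lt_opts hb)
  · exact Nat.add_lt_add (sizeOf_lt_opts ha) (sizeOf_lt_opts hb)

theorem ext_add_congr {G G' H H' : IGame} (h1 : Ext G G') (h2 : Ext H H') :
    Ext (add G H) (add G' H') := by
  refine ext_of (fun w hw => ?_) (fun w hw => ?_)
  · rcases mem_opts_add_cases hw with ⟨a, ha, rfl⟩ | ⟨b, hb, rfl⟩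
    · obtain ⟨a', ha', he⟩ := h1.left a ha
      exact ⟨add a' H', mem_opts_add_left H' ha', ext_add_congr he h2⟩
    · obtain ⟨b', hb', he⟩ := h2.left b hb
      exact ⟨add G' b', mem_opts_add_right G' hb', ext_add_congr h1 he⟩
  · rcases mem_opts_add_cases hw with ⟨a', ha', rfl⟩ | ⟨b', hb', rfl⟩
    · obtain ⟨a, ha, he⟩ := h1.right a' ha'
      exact ⟨add a H, mem_opts_add_left H ha, ext_add_congr he h2⟩
    · obtain ⟨b, hb, he⟩ := h2.right b' hb'
      exact ⟨add G b, mem_opts_add_right G hb, ext_add_congr h1 he⟩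
termination_by sizeOf G + sizeOf G' + sizeOf H + sizeOf H'
decreasing_by
  · have := sizeOf_lt_opts ha; have := sizeOf_lt_opts ha'; omega
  · have := sizeOf_lt_opts hb; have := sizeOf_lt_opts hb'; omega
  · have := sizeOf_lt_opts ha; have := sizeOf_lt_opts ha'; omega
  · have := sizeOf_lt_opts hb; have := sizeOf_lt_opts hb'; omega

theorem ext_add_comm (G H : IGame) : Ext (add G H) (add H G) := by
  refine ext_of (fun w hw => ?_) (fun w hw => ?_)
  · rcases mem_opts_add_cases hw with ⟨a, ha, rfl⟩ | ⟨b, hb, rfl⟩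
    · exact ⟨add H a, mem_opts_add_right H ha, ext_add_comm a H⟩
    · exact ⟨add b G, mem_opts_add_left G hb, ext_add_comm G b⟩
  · rcases mem_opts_add_cases hw with ⟨b, hb, rfl⟩ | ⟨a, ha, rfl⟩
    · exact ⟨add G b, mem_opts_add_right G hb, ext_add_comm G b⟩
    · exact ⟨add a H, mem_opts_add_left H ha, ext_add_comm a H⟩
termination_by sizeOf G + sizeOf H
decreasing_by
  · have := sizeOf_lt_opts ha; omega
  · have := sizeOf_lt_opts hb; omega
  · have := sizeOf_lt_opts hb; omega
  · have := sizeOf_lt_opts ha; omega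

theorem ext_add_assoc (A B C : IGame) : Ext (add (add A B) C) (add A (add B C)) := by
  refine ext_of (fun w hw => ?_) (fun w hw => ?_)
  · rcases mem_opts_add_cases hw with ⟨u, hu, rfl⟩ | ⟨c, hc, rfl⟩
    · rcases mem_opts_add_cases hu with ⟨a, ha, rfl⟩ | ⟨b, hb, rfl⟩
      · exact ⟨add a (add B C), mem_opts_add_left _ ha, ext_add_assoc a B C⟩
      · exact ⟨add A (add b C), mem_opts_add_right _ (mem_opts_add_left _ hb),
          ext_add_assoc A b C⟩
    · exact ⟨add A (add B c), mem_opts_add_right _ (mem_opts_add_right _ hc),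
        ext_add_assoc A B c⟩
  · rcases mem_opts_add_cases hw with ⟨a, ha, rfl⟩ | ⟨u, hu, rfl⟩
    · exact ⟨add (add a B) C, mem_opts_add_left _ (mem_opts_add_left _ ha),
        ext_add_assoc a B C⟩
    · rcases mem_opts_add_cases hu with ⟨b, hb, rfl⟩ | ⟨c, hc, rfl⟩
      · exact ⟨add (add A b) C, mem_opts_add_left _ (mem_opts_add_right _ hb),
          ext_add_assoc A b C⟩
      · exact ⟨add (add A B) c, mem_opts_add_right _ hc, ext_add_assoc A B c⟩
termination_by sizeOf A + sizeOf B + sizeOf C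
decreasing_by
  · have := sizeOf_lt_opts ha; omega
  · have := sizeOf_lt_opts hb; omega
  · have := sizeOf_lt_opts hc; omega
  · have := sizeOf_lt_opts ha; omega
  · have := sizeOf_lt_opts hb; omega
  · have := sizeOf_lt_opts hc; omega

theorem ext_add_zero (G : IGame) : Ext (add G zero) G := by
  refine ext_of (fun w hw => ?_) (fun a ha => ?_)
  · rcases mem_opts_add_cases hw with ⟨a, ha, rfl⟩ | ⟨b, hb, rfl⟩
    · exact ⟨a, ha, ext_add_zero a⟩
    · rw [opts_zero] at hb; cases hb
  · exact ⟨add a zero, mem_opts_add_left _ ha, ext_add_zero a⟩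
termination_by sizeOf G
decreasing_by
  · exact sizeOf_lt_opts ha
  · exact sizeOf_lt_opts ha

end Ext
section MEquivAlg

theorem ext_of_nil {G H : IGame} (hG : G.opts = []) (hH : H.opts = []) : Ext G H :=
  ext_of (fun a ha => by rw [hG] at ha; cases ha) (fun b hb => by rw [hH] at hb; cases hb)

theorem mequiv_of_ext {G H : IGame} (h : Ext G H) : MEquiv G H := fun X =>
  ext_misereP (ext_add_congr h (ext_refl X))

theorem mequiv_congr_right {G H : IGame} (h : MEquiv G H) (X : IGame) :
    MEquiv (add G X) (add H X) := by
  intro T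
  have e1 := ext_misereP (ext_add_assoc G X T)
  have e2 := ext_misereP (ext_add_assoc H X T)
  rw [e1, e2]
  exact h (add X T)

theorem mequiv_congr_left {G H : IGame} (h : MEquiv G H) (X : IGame) :
    MEquiv (add X G) (add X H) :=
  mequiv_trans (mequiv_of_ext (ext_add_comm X G))
    (mequiv_trans (mequiv_congr_right h X) (mequiv_of_ext (ext_add_comm H X)))

end MEquivAlg

section TwoStar

/-- `o(Y + * + *) = o(Y)`: the key fact that `* + *` is a unit. -/
theorem misereP_add_twostar (Y : IGame) :
    MisereP (add Y (add star star)) ↔ MisereP Y := by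
  have hss : (add star star).opts = [add zero star, add star zero] := by
    rw [opts_add]; rfl
  have hzs : (add zero star).opts = [add zero zero] := by rw [opts_add]; rfl
  have hsz : (add star zero).opts = [add zero zero] := by rw [opts_add]; rfl
  have hzz : (add zero zero).opts = [] := by rw [opts_add]; rfl
  have hYzz : MisereP (add Y (add zero zero)) ↔ MisereP Y :=
    ext_misereP (ext_trans (ext_add_congr (ext_refl Y)
      (ext_of_nil hzz opts_zero)) (ext_add_zero Y))
  constructor
  · intro h
    have h2 := (misereP_iff _).1 h
    -- Y must be nonempty
    have hYne : Y.opts ≠ [] := by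
      intro hnil
      have hPzs : MisereP (add Y (add zero star)) := by
        refine misereP_of ?_ ?_
        · rw [opts_add, hnil, hzs]; simp
        · intro w hw
          rcases mem_opts_add_cases hw with ⟨a, ha, rfl⟩ | ⟨b, hb, rfl⟩
          · rw [hnil] at ha; cases ha
          · rw [hzs, List.mem_singleton] at hb
            subst hb
            intro hP
            have hPY : MisereP Y := hYzz.1 hP
            exact ((misereP_iff Y).1 hPY).1 hnil
      exact h2.2 _ (mem_opts_add_right Y (by rw [hss]; exact List.mem_cons_self)) hPzs
    refine misereP_of hYne fun y hy hP => ?_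
    exact h2.2 _ (mem_opts_add_left _ hy)
      ((misereP_add_twostar y).2 hP)
  · intro hY
    have hY2 := (misereP_iff Y).1 hY
    refine misereP_of ?_ ?_
    · rw [opts_add, hss]; simp
    · intro w hw
      rcases mem_opts_add_cases hw with ⟨y, hy, rfl⟩ | ⟨b, hb, rfl⟩
      · intro hP
        exact hY2.2 y hy ((misereP_add_twostar y).1 hP)
      · rw [hss] at hb
        have key : ∀ u : IGame, u.opts = [add zero zero] →
            ¬ MisereP (add Y u) := by
          intro u hu hP
          have hmem : add Y (add zero zero) ∈ (add Y u).opts :=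
            mem_opts_add_right Y (by rw [hu]; exact List.mem_cons_self)
          exact not_misereP hmem (hYzz.2 hY) hP
        simp only [List.mem_cons, List.mem_singleton, List.not_mem_nil, or_false] at hb
        rcases hb with rfl | rfl
        · exact key _ hzs
        · exact key _ hsz
termination_by sizeOf Y
decreasing_by
  · exact sizeOf_lt_opts hy
  · exact sizeOf_lt_opts hy

theorem mequiv_twostar (G : IGame) : MEquiv (add (add G star) star) G := by
  intro X
  have e : Ext (add (add (add G star) star) X) (add (add G X) (add star star)) := by
    refine ext_trans (ext_add_congr (ext_add_assoc G star star) (ext_refl X)) ?_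
    refine ext_trans (ext_add_assoc G (add star star) X) ?_
    refine ext_trans (ext_add_congr (ext_refl G) (ext_add_comm (add star star) X)) ?_
    exact ext_symm (ext_add_assoc G X (add star star))
  rw [ext_misereP e, misereP_add_twostar (add G X)]

end TwoStar

section Mate

theorem opts_mate_of_nil {G : IGame} (h : G.opts = []) : (mate G).opts = [zero] := by
  cases G with | mk l =>
  have : l = [] := h
  subst this
  rw [mate]
  rfl

theorem opts_mate_of_ne {G : IGame} (h : G.opts ≠ []) : (mate G).opts = G.opts.map mate := by
  cases G with | mk l =>
  rcases l with _ | ⟨x, l⟩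
  · exact absurd rfl h
  · rw [mate]
    show ((x :: l).attach.map fun y => mate y.1) = _
    simp only [List.map_attach_eq_pmap, List.pmap_eq_map]
    rfl

theorem opts_mate_ne_nil (G : IGame) : (mate G).opts ≠ [] := by
  by_cases h : G.opts = []
  · rw [opts_mate_of_nil h]; simp
  · rw [opts_mate_of_ne h]
    simpa using h

theorem mem_opts_mate {x G : IGame} (h : x ∈ G.opts) : mate x ∈ (mate G).opts := by
  have hne : G.opts ≠ [] := by intro hh; rw [hh] at h; cases h
  rw [opts_mate_of_ne hne]
  exact List.mem_map_of_mem h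

theorem misereP_add_mate (G : IGame) : MisereP (add G (mate G)) := by
  refine misereP_of ?_ ?_
  · rw [opts_add]
    have := opts_mate_ne_nil G
    simpa using fun _ => this
  · intro w hw
    rcases mem_opts_add_cases hw with ⟨x, hx, rfl⟩ | ⟨u, hu, rfl⟩
    · exact not_misereP (mem_opts_add_right x (mem_opts_mate hx)) (misereP_add_mate x)
    · by_cases hG : G.opts = []
      · rw [opts_mate_of_nil hG, List.mem_singleton] at hu
        subst hu
        intro hP
        have : (add G zero).opts = [] := by rw [opts_add_eq_nil]; exact ⟨hG, rfl⟩
        exact ((misereP_iff _).1 hP).1 this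
      · rw [opts_mate_of_ne hG] at hu
        obtain ⟨x, hx, rfl⟩ := List.mem_map.1 hu
        exact not_misereP (mem_opts_add_left (mate x) hx) (misereP_add_mate x)
termination_by sizeOf G
decreasing_by
  · exact sizeOf_lt_opts hx
  · exact sizeOf_lt_opts hx

end Mate

section Trap

theorem trap_aux {X Y Z : IGame} (hX : ¬ MisereP (add X Z)) (hY : MisereP (add Y Z)) :
    ∃ t : IGame, MisereP (add X t) ∧ ¬ MisereP (add Y t) := by
  refine ⟨mk ((mate X).opts ++ [Z]), ?_, ?_⟩
  · have hZt : Z ∈ (mk ((mate X).opts ++ [Z])).opts := by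
      show Z ∈ (mate X).opts ++ [Z]
      simp
    refine misereP_of ?_ ?_
    · rw [opts_add]
      intro hnil
      simp only [List.append_eq_nil_iff, List.map_eq_nil_iff] at hnil
      have : (mk ((mate X).opts ++ [Z])).opts = [] := hnil.2
      simp [opts] at this
    · intro w hw
      rcases mem_opts_add_cases hw with ⟨x, hx, rfl⟩ | ⟨u, hu, rfl⟩
      · -- option x + t : has P-option x + mate x
        have hmx : mate x ∈ (mk ((mate X).opts ++ [Z])).opts := by
          show mate x ∈ (mate X).opts ++ [Z]
          exact List.mem_append_left _ (mem_opts_mate hx)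
        exact not_misereP (mem_opts_add_right x hmx) (misereP_add_mate x)
      · -- option X + u, u ∈ mate X opts or u = Z
        have hu' : u ∈ (mate X).opts ++ [Z] := hu
        rcases List.mem_append.1 hu' with hm | hZ
        · by_cases hXnil : X.opts = []
          · rw [opts_mate_of_nil hXnil, List.mem_singleton] at hm
            subst hm
            intro hP
            have : (add X zero).opts = [] := by rw [opts_add_eq_nil]; exact ⟨hXnil, rfl⟩
            exact ((misereP_iff _).1 hP).1 this
          · rw [opts_mate_of_ne hXnil] at hm
            obtain ⟨x, hx, rfl⟩ := List.mem_map.1 hm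
            exact not_misereP (mem_opts_add_left (mate x) hx) (misereP_add_mate x)
        · rw [List.mem_singleton] at hZ
          subst hZ
          exact hX
  · have hZt : Z ∈ (mk ((mate X).opts ++ [Z])).opts := by
      show Z ∈ (mate X).opts ++ [Z]
      simp
    exact not_misereP (mem_opts_add_right Y hZt) hY

theorem trap {X Y : IGame} (h : ¬ MEquiv X Y) :
    ∃ t : IGame, MisereP (add X t) ∧ ¬ MisereP (add Y t) := by
  have : ∃ Z, ¬ (MisereP (add X Z) ↔ MisereP (add Y Z)) := by
    by_contra h'
    push_neg at h'
    exact h fun Z => h' Z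
  obtain ⟨Z, hZ⟩ := this
  by_cases hx : MisereP (add X Z)
  · exact ⟨Z, hx, fun hy => hZ ⟨fun _ => hy, fun _ => hx⟩⟩
  · have hy : MisereP (add Y Z) := by
      by_contra hy
      exact hZ ⟨fun hh => absurd hh hx, fun hh => absurd hh hy⟩
    exact trap_aux hx hy

end Trap
section Linked

/-- The fundamental construction: if no option of `G` is misère-equal to `H` and no option
of `H` is misère-equal to `G`, then `G` and `H` are linked. -/
theorem linked_of_options {G H : IGame}
    (h1 : ∀ x ∈ G.opts, ¬ MEquiv x H) (h2 : ∀ y ∈ H.opts, ¬ MEquiv y G) :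
    ∃ T : IGame, MisereP (add G T) ∧ MisereP (add H T) := by
  classical
  by_cases hnil : G.opts = [] ∧ H.opts = []
  · -- T := star works
    refine ⟨star, ?_, ?_⟩ <;>
    · refine misereP_of ?_ ?_
      · rw [opts_add]
        simp [opts_star]
      · intro w hw
        rcases mem_opts_add_cases hw with ⟨a, ha, rfl⟩ | ⟨b, hb, rfl⟩
        · first
            | (rw [hnil.1] at ha; cases ha)
            | (rw [hnil.2] at ha; cases ha)
        · rw [opts_star, List.mem_singleton] at hb
          subst hb
          intro hP
          refine ((misereP_iff _).1 hP).1 ?_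
          rw [opts_add_eq_nil]
          first
            | exact ⟨hnil.1, opts_zero⟩
            | exact ⟨hnil.2, opts_zero⟩
  · set f : IGame → IGame := fun x =>
      if h : ∃ t, MisereP (add x t) ∧ ¬ MisereP (add H t) then h.choose else zero with hf
    set g : IGame → IGame := fun y =>
      if h : ∃ t, MisereP (add y t) ∧ ¬ MisereP (add G t) then h.choose else zero with hg
    have hfs : ∀ x ∈ G.opts, MisereP (add x (f x)) ∧ ¬ MisereP (add H (f x)) := by
      intro x hx
      have hex := trap (h1 x hx)
      rw [hf]
      simp only [dif_pos hex]
      exact hex.choose_spec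
    have hgs : ∀ y ∈ H.opts, MisereP (add y (g y)) ∧ ¬ MisereP (add G (g y)) := by
      intro y hy
      have hex := trap (h2 y hy)
      rw [hg]
      simp only [dif_pos hex]
      exact hex.choose_spec
    set T : IGame := mk (G.opts.map f ++ H.opts.map g) with hT
    have hTopts : T.opts = G.opts.map f ++ H.opts.map g := rfl
    have hTne : T.opts ≠ [] := by
      rw [hTopts]
      intro hcon
      simp only [List.append_eq_nil_iff, List.map_eq_nil_iff] at hcon
      exact hnil ⟨hcon.1, hcon.2⟩
    have hmemf : ∀ x ∈ G.opts, f x ∈ T.opts := by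
      intro x hx
      rw [hTopts]
      exact List.mem_append_left _ (List.mem_map_of_mem hx)
    have hmemg : ∀ y ∈ H.opts, g y ∈ T.opts := by
      intro y hy
      rw [hTopts]
      exact List.mem_append_right _ (List.mem_map_of_mem hy)
    refine ⟨T, ?_, ?_⟩
    · refine misereP_of ?_ ?_
      · rw [opts_add]
        intro hcon
        simp only [List.append_eq_nil_iff, List.map_eq_nil_iff] at hcon
        exact hTne hcon.2
      · intro w hw
        rcases mem_opts_add_cases hw with ⟨x, hx, rfl⟩ | ⟨u, hu, rfl⟩
        · exact not_misereP (mem_opts_add_right x (hmemf x hx)) (hfs x hx).1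
        · rw [hTopts] at hu
          rcases List.mem_append.1 hu with hm | hm
          · obtain ⟨x, hx, rfl⟩ := List.mem_map.1 hm
            exact not_misereP (mem_opts_add_left (f x) hx) (hfs x hx).1
          · obtain ⟨y, hy, rfl⟩ := List.mem_map.1 hm
            exact (hgs y hy).2
    · refine misereP_of ?_ ?_
      · rw [opts_add]
        intro hcon
        simp only [List.append_eq_nil_iff, List.map_eq_nil_iff] at hcon
        exact hTne hcon.2
      · intro w hw
        rcases mem_opts_add_cases hw with ⟨y, hy, rfl⟩ | ⟨u, hu, rfl⟩
        · exact not_misereP (mem_opts_add_right y (hmemg y hy)) (hgs y hy).1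
        · rw [hTopts] at hu
          rcases List.mem_append.1 hu with hm | hm
          · obtain ⟨x, hx, rfl⟩ := List.mem_map.1 hm
            exact (hfs x hx).2
          · obtain ⟨y, hy, rfl⟩ := List.mem_map.1 hm
            exact not_misereP (mem_opts_add_left (g y) hy) (hgs y hy).1

/-- `G` and `G + *` are never linked. -/
theorem not_linked_star {A T : IGame} (h1 : MisereP (add A T))
    (h2 : MisereP (add (add A star) T)) : False := by
  have hmem : add A zero ∈ (add A star).opts :=
    mem_opts_add_right A (by rw [opts_star]; exact List.mem_singleton.2 rfl)
  have hmem2 : add (add A zero) T ∈ (add (add A star) T).opts := mem_opts_add_left T hmem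
  have hP : MisereP (add (add A zero) T) :=
    (ext_misereP (ext_add_congr (ext_add_zero A) (ext_refl T))).2 h1
  exact not_misereP hmem2 hP h2

end Linked

section Canonical

theorem canonical_of_mem {K x : IGame} (hK : Canonical K) (hx : x ∈ K.opts) :
    Canonical x :=
  fun H hH => hK H (Relation.ReflTransGen.tail hH hx)

theorem mequiv_of_pointwise {A B : IGame}
    (h1 : ∀ a ∈ A.opts, ∃ b ∈ B.opts, MEquiv a b)
    (h2 : ∀ b ∈ B.opts, ∃ a ∈ A.opts, MEquiv a b) : MEquiv A B := by
  have h0 : A.opts = [] ↔ B.opts = [] := by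
    constructor
    · intro hA
      rcases hB : B.opts with _ | ⟨b, r⟩
      · rfl
      · obtain ⟨a, ha, -⟩ := h2 b (by rw [hB]; exact List.mem_cons_self)
        rw [hA] at ha; cases ha
    · intro hB
      rcases hA : A.opts with _ | ⟨a, l⟩
      · rfl
      · obtain ⟨b, hb, -⟩ := h1 a (by rw [hA]; exact List.mem_cons_self)
        rw [hB] at hb; cases hb
  intro X
  induction X using strongInd with
  | _ X ihX =>
    refine misereP_corr ?_ ?_ ?_
    · rw [opts_add_eq_nil, opts_add_eq_nil, h0]
    · intro w hw
      rcases mem_opts_add_cases hw with ⟨a, ha, rfl⟩ | ⟨x, hx, rfl⟩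
      · obtain ⟨b, hb, he⟩ := h1 a ha
        exact ⟨add b X, mem_opts_add_left X hb, he X⟩
      · exact ⟨add B x, mem_opts_add_right B hx, ihX x hx⟩
    · intro w hw
      rcases mem_opts_add_cases hw with ⟨b, hb, rfl⟩ | ⟨x, hx, rfl⟩
      · obtain ⟨a, ha, he⟩ := h2 b hb
        exact ⟨add a X, mem_opts_add_left X ha, he X⟩
      · exact ⟨add A x, mem_opts_add_right A hx, ihX x hx⟩

theorem exists_canonical : ∀ G : IGame, ∃ K, Canonical K ∧ MEquiv K G := by
  classical
  refine strongInd (fun G ihG => ?_)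
  set f : IGame → IGame := fun x =>
    if h : ∃ K, Canonical K ∧ MEquiv K x then h.choose else zero with hf
  have hfs : ∀ x ∈ G.opts, Canonical (f x) ∧ MEquiv (f x) x := by
    intro x hx
    have hex := ihG x hx
    rw [hf]
    simp only [dif_pos hex]
    exact hex.choose_spec
  set M : IGame := mk (G.opts.map f) with hM
  have hMopts : M.opts = G.opts.map f := rfl
  have hMG : MEquiv M G := by
    refine mequiv_of_pointwise ?_ ?_
    · intro a ha
      rw [hMopts] at ha
      obtain ⟨x, hx, rfl⟩ := List.mem_map.1 ha
      exact ⟨x, hx, (hfs x hx).2⟩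
    · intro x hx
      exact ⟨f x, by rw [hMopts]; exact List.mem_map_of_mem hx, (hfs x hx).2⟩
  by_cases hrev : HasReversibleOption M
  · obtain ⟨m, hm, x, hx, hxM⟩ := hrev
    have hmc : Canonical m := by
      rw [hMopts] at hm
      obtain ⟨a, ha, rfl⟩ := List.mem_map.1 hm
      exact (hfs a ha).1
    exact ⟨x, canonical_of_mem hmc hx, mequiv_trans hxM hMG⟩
  · refine ⟨M, ?_, hMG⟩
    intro Hh hpath
    rcases Relation.ReflTransGen.cases_tail hpath with heq | ⟨c, hc1, hc2⟩
    · exact heq ▸ hrev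
    · have hc : c ∈ M.opts := hc2
      have : Canonical c := by
        rw [hMopts] at hc
        obtain ⟨a, ha, rfl⟩ := List.mem_map.1 hc
        exact (hfs a ha).1
      exact this Hh hc1

end Canonical
/-- Every game is either even or odd, but not both. -/
theorem even_or_odd (G : IGame) :
    (EvenG G ∨ OddG G) ∧ ¬ (EvenG G ∧ OddG G) := by
  constructor
  · -- Every game is even or odd.
    obtain ⟨A, cA, eA⟩ := exists_canonical G
    obtain ⟨B, cB, eB⟩ := exists_canonical (add G star)
    have key : (∃ b ∈ B.opts, MEquiv b A) ∨ (∃ a ∈ A.opts, MEquiv a B) := by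
      by_contra h
      push_neg at h
      obtain ⟨T, hAT, hBT⟩ := linked_of_options
        (fun a ha => h.2 a ha) (fun b hb => h.1 b hb)
      have eBA : MEquiv B (add A star) :=
        mequiv_trans eB (mequiv_symm (mequiv_congr_right eA star))
      exact not_linked_star hAT ((eBA T).1 hBT)
    rcases key with ⟨b, hb, hbA⟩ | ⟨a, ha, haB⟩
    · exact Or.inl ⟨b, B, canonical_of_mem cB hb, mequiv_trans hbA eA, cB, eB, hb⟩
    · exact Or.inr ⟨a, A, canonical_of_mem cA ha, mequiv_trans haB eB, cA,
        mequiv_trans eA (mequiv_symm (mequiv_twostar G)), ha⟩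
  · -- Not both.
    rintro ⟨⟨K, L, cK, eKG, cL, eL, hKL⟩, ⟨K', L', cK', eK', cL', eL', hK'L'⟩⟩
    have h1 : ∀ x ∈ K.opts, ¬ MEquiv x K' := by
      intro x hx hxe
      exact cL L Relation.ReflTransGen.refl
        ⟨K, hKL, x, hx, mequiv_trans hxe (mequiv_trans eK' (mequiv_symm eL))⟩
    have h2 : ∀ y ∈ K'.opts, ¬ MEquiv y K := by
      intro y hy hye
      refine cL' L' Relation.ReflTransGen.refl ⟨K', hK'L', y, hy, ?_⟩
      exact mequiv_trans hye (mequiv_trans eKG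
        (mequiv_trans (mequiv_symm (mequiv_twostar G)) (mequiv_symm eL')))
    obtain ⟨T, hKT, hK'T⟩ := linked_of_options h1 h2
    have eK'K : MEquiv K' (add K star) :=
      mequiv_trans eK' (mequiv_symm (mequiv_congr_right eKG star))
    exact not_linked_star hKT ((eK'K T).1 hK'T)

end IGame
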